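/- Let a ∈ C¹([-1,1]) be positive on (-1,1), vanish at ±1, and suppose A(x) = ∫₀ˣ ds/a(s) ∈ L¹(-1,1). Then for every u in the weighted Sobolev space H¹_a(-1,1) (i.e., u ∈ L²(-1,1), u locally absolutely continuous on (-1,1), √a·u' ∈ L²(-1,1)) one has the pointwise bound |u(0)| ≤ C‖u‖_{H¹_a}, where C depends only on a, and ‖u‖²_{H¹_a} = ‖u‖²_{L²} + ‖√a u'‖²_{L²}. -/

import Mathlib

open MeasureTheory Set Real

/-- Pointwise bound at 0 for functions in the weighted Sobolev space H¹_a(-1,1):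
    |u(0)| ≤ C ‖u‖_{H¹_a}, with C depending only on a. -/
theorem pointwise_bound_at_zero
    (a : ℝ → ℝ) (ha : ContDiffOn ℝ 1 a (Icc (-1) 1))
    (hapos : ∀ x ∈ Ioo (-1:ℝ) 1, 0 < a x)
    (ha1 : a (-1) = 0) (ha2 : a 1 = 0)
    (A : ℝ → ℝ) (hA : ∀ x, A x = ∫ s in (0:ℝ)..x, 1 / a s)
    (hAint : IntegrableOn A (Ioo (-1) 1)) :
    ∃ C > 0, ∀ (u u' : ℝ → ℝ),
      (∀ x ∈ Ioo (-1:ℝ) 1, HasDerivAt u (u' x) x) →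
      MemLp u 2 (volume.restrict (Ioo (-1) 1)) →
      MemLp (fun x => Real.sqrt (a x) * u' x) 2 (volume.restrict (Ioo (-1) 1)) →
      |u 0| ≤ C * Real.sqrt
        ((∫ x in Ioo (-1:ℝ) 1, u x ^ 2) + ∫ x in Ioo (-1:ℝ) 1, a x * u' x ^ 2) := by
  have hacont : ContinuousOn a (Icc (-1) 1) := ha.continuousOn
  have hpq : Real.HolderConjugate 2 2 := Real.HolderConjugate.two_two
  have hofReal : ENNReal.ofReal (2:ℝ) = 2 := by norm_num
  have hrpow2 : ∀ y : ℝ, y ^ (2:ℝ) = y ^ 2 := by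
    intro y; rw [show (2:ℝ) = ((2:ℕ):ℝ) by norm_num, Real.rpow_natCast]
  have hsub01 : Ioo (0:ℝ) 1 ⊆ Ioo (-1:ℝ) 1 := Ioo_subset_Ioo (by norm_num) le_rfl
  have hAint01 : IntegrableOn A (Ioo 0 1) := hAint.mono_set hsub01
  have hsqrtAint : IntegrableOn (fun x => Real.sqrt (A x)) (Ioo 0 1) := by
    refine (hAint01.norm.add (integrable_const 1)).mono'
      (Real.continuous_sqrt.comp_aestronglyMeasurable hAint01.aestronglyMeasurable) ?_
    filter_upwards with x
    rw [Real.norm_eq_abs, abs_of_nonneg (Real.sqrt_nonneg _)]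
    rcases le_total (A x) 1 with h | h
    · calc Real.sqrt (A x) ≤ Real.sqrt 1 := Real.sqrt_le_sqrt h
        _ = 1 := Real.sqrt_one
        _ ≤ ‖A x‖ + 1 := by linarith [norm_nonneg (A x)]
    · calc Real.sqrt (A x) ≤ A x :=
          (Real.sqrt_le_left (by linarith)).2 (by nlinarith)
        _ ≤ ‖A x‖ + 1 := by
          rw [Real.norm_eq_abs]; linarith [le_abs_self (A x)]
  set K : ℝ := ∫ x in Ioo (0:ℝ) 1, Real.sqrt (A x) with hKdef
  have hK0 : 0 ≤ K :=
    setIntegral_nonneg measurableSet_Ioo fun x _ => Real.sqrt_nonneg _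
  refine ⟨1 + K, by linarith, ?_⟩
  intro u u' hderiv hu hv
  set S := ∫ x in Ioo (-1:ℝ) 1, u x ^ 2 with hSdef
  set T := ∫ x in Ioo (-1:ℝ) 1, a x * u' x ^ 2 with hTdef
  have huSq : IntegrableOn (fun x => u x ^ 2) (Ioo (-1:ℝ) 1) := hu.integrable_sq
  have havSq : IntegrableOn (fun x => a x * u' x ^ 2) (Ioo (-1:ℝ) 1) := by
    refine (hv.integrable_sq).congr ?_
    filter_upwards [ae_restrict_mem measurableSet_Ioo] with x hx
    rw [mul_pow, Real.sq_sqrt (hapos x hx).le]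
  have hS : 0 ≤ S := setIntegral_nonneg measurableSet_Ioo fun x _ => sq_nonneg _
  have hT : 0 ≤ T := setIntegral_nonneg measurableSet_Ioo fun x hx =>
    mul_nonneg (hapos x hx).le (sq_nonneg _)
  set R := Real.sqrt (S + T) with hRdef
  set M := Real.sqrt S with hMdef
  set N := Real.sqrt T with hNdef
  have hMR : M ≤ R := Real.sqrt_le_sqrt (by linarith)
  have hNR : N ≤ R := Real.sqrt_le_sqrt (by linarith)
  have hN0 : 0 ≤ N := Real.sqrt_nonneg _
  -- key pointwise estimate for x ∈ (0,1)
  have key : ∀ x ∈ Ioo (0:ℝ) 1, |u 0| ≤ |u x| + N * Real.sqrt (A x) := by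
    intro x hx
    obtain ⟨hx0, hx1⟩ := hx
    have hIccsub : Icc (0:ℝ) x ⊆ Ioo (-1:ℝ) 1 := fun s hs =>
      ⟨by linarith [hs.1], lt_of_le_of_lt hs.2 hx1⟩
    have hIocsub : Ioc (0:ℝ) x ⊆ Ioo (-1:ℝ) 1 := fun s hs => hIccsub ⟨hs.1.le, hs.2⟩
    have hIocIcc : Ioc (0:ℝ) x ⊆ Icc (-1:ℝ) 1 := fun s hs =>
      Ioo_subset_Icc_self (hIocsub hs)
    obtain ⟨s₀, hs₀mem, hs₀min'⟩ := isCompact_Icc.exists_isMinOn (nonempty_Icc.2 hx0.le)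
      (hacont.mono (fun s hs => ⟨by linarith [hs.1], by linarith [hs.2]⟩ : Icc (0:ℝ) x ⊆ Icc (-1) 1))
    have hs₀min : ∀ s ∈ Icc (0:ℝ) x, a s₀ ≤ a s := fun s hs => hs₀min' hs
    have hε : 0 < a s₀ := hapos s₀ (hIccsub hs₀mem)
    set ε := a s₀ with hεdef
    set μx := volume.restrict (Ioc (0:ℝ) x) with hμxdef
    haveI : IsFiniteMeasure μx := by
      constructor
      rw [hμxdef, Measure.restrict_apply_univ]
      exact (measure_mono hIocsub).trans_lt (by simp [Real.volume_Ioo])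
    have hle : μx ≤ volume.restrict (Ioo (-1:ℝ) 1) := Measure.restrict_mono hIocsub le_rfl
    set f : ℝ → ℝ := fun s => |Real.sqrt (a s) * u' s| with hfdef
    set g : ℝ → ℝ := fun s => (Real.sqrt (a s))⁻¹ with hgdef
    have hf2 : MemLp f 2 μx := by
      have := (hv.mono_measure hle).norm
      simpa [hfdef, Real.norm_eq_abs, abs_mul] using this
    have hgcont : ContinuousOn g (Ioc (0:ℝ) x) := by
      refine ContinuousOn.inv₀ (Real.continuous_sqrt.comp_continuousOn (hacont.mono hIocIcc)) ?_
      intro s hs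
      exact ne_of_gt (Real.sqrt_pos.2 (hapos s (hIocsub hs)))
    have hgmeas : AEStronglyMeasurable g μx := hgcont.aestronglyMeasurable measurableSet_Ioc
    have hg2 : MemLp g 2 μx := by
      refine MemLp.of_bound hgmeas ((Real.sqrt ε)⁻¹) ?_
      filter_upwards [ae_restrict_mem measurableSet_Ioc] with s hs
      have hεs : ε ≤ a s := hs₀min s ⟨hs.1.le, hs.2⟩
      rw [Real.norm_eq_abs, abs_of_nonneg (inv_nonneg.2 (Real.sqrt_nonneg _))]
      have h1 : Real.sqrt ε ≤ Real.sqrt (a s) := Real.sqrt_le_sqrt hεs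
      have h2 : (0:ℝ) < Real.sqrt ε := Real.sqrt_pos.2 hε
      exact inv_anti₀ h2 h1
    have hf_nonneg : (0:ℝ → ℝ) ≤ᵐ[μx] f := Filter.Eventually.of_forall fun s => abs_nonneg _
    have hg_nonneg : (0:ℝ → ℝ) ≤ᵐ[μx] g :=
      Filter.Eventually.of_forall fun s => inv_nonneg.2 (Real.sqrt_nonneg _)
    have holder := integral_mul_le_Lp_mul_Lq_of_nonneg (μ := μx) hpq hf_nonneg hg_nonneg
      (by rw [hofReal]; exact hf2) (by rw [hofReal]; exact hg2)
    -- rewrite the three integrals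
    have hLHS : ∫ s, f s * g s ∂μx = ∫ s in Ioc (0:ℝ) x, |u' s| := by
      refine setIntegral_congr_fun measurableSet_Ioc fun s hs => ?_
      have has : 0 < a s := hapos s (hIocsub hs)
      have hss : Real.sqrt (a s) ≠ 0 := ne_of_gt (Real.sqrt_pos.2 has)
      simp only [hfdef, hgdef, abs_mul, abs_of_nonneg (Real.sqrt_nonneg (a s))]
      field_simp
    have hF2 : ∫ s, f s ^ (2:ℝ) ∂μx = ∫ s in Ioc (0:ℝ) x, a s * u' s ^ 2 := by
      refine setIntegral_congr_fun measurableSet_Ioc fun s hs => ?_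
      have has : 0 < a s := hapos s (hIocsub hs)
      rw [hrpow2, hfdef]
      simp only [sq_abs, mul_pow, Real.sq_sqrt has.le]
    have hG2 : ∫ s, g s ^ (2:ℝ) ∂μx = A x := by
      rw [hA x, intervalIntegral.integral_of_le hx0.le]
      refine setIntegral_congr_fun measurableSet_Ioc fun s hs => ?_
      have has : 0 < a s := hapos s (hIocsub hs)
      rw [hrpow2, hgdef]
      simp only [inv_pow, Real.sq_sqrt has.le, one_div]
    have hA0 : 0 ≤ A x := by
      rw [← hG2]
      exact integral_nonneg fun s => Real.rpow_nonneg (inv_nonneg.2 (Real.sqrt_nonneg _)) _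
    have hIocT : ∫ s in Ioc (0:ℝ) x, a s * u' s ^ 2 ≤ T := by
      refine setIntegral_mono_set havSq ?_ (Filter.Eventually.of_forall hIocsub)
      filter_upwards [ae_restrict_mem measurableSet_Ioo] with s hs
      exact mul_nonneg (hapos s hs).le (sq_nonneg _)
    have hIocT0 : 0 ≤ ∫ s in Ioc (0:ℝ) x, a s * u' s ^ 2 := by
      rw [← hF2]
      exact integral_nonneg fun s => Real.rpow_nonneg (abs_nonneg _) _
    have hmain : ∫ s in Ioc (0:ℝ) x, |u' s| ≤ N * Real.sqrt (A x) := by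
      rw [← hLHS]
      refine holder.trans ?_
      rw [hF2, hG2, ← Real.sqrt_eq_rpow, ← Real.sqrt_eq_rpow]
      have h1 : Real.sqrt (∫ s in Ioc (0:ℝ) x, a s * u' s ^ 2) ≤ N :=
        Real.sqrt_le_sqrt hIocT
      exact mul_le_mul_of_nonneg_right h1 (Real.sqrt_nonneg _)
    -- integrability of u' on Ioc 0 x
    have hderivmeas : AEStronglyMeasurable u' μx := by
      refine (measurable_deriv u).aestronglyMeasurable.congr ?_
      filter_upwards [ae_restrict_mem measurableSet_Ioc] with s hs
      exact (hderiv s (hIocsub hs)).deriv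
    have hu'int : IntegrableOn u' (Ioc 0 x) := by
      have hfint : Integrable f μx := hf2.integrable (by norm_num)
      refine (hfint.mul_const ((Real.sqrt ε)⁻¹)).mono' hderivmeas ?_
      filter_upwards [ae_restrict_mem measurableSet_Ioc] with s hs
      have hεs : ε ≤ a s := hs₀min s ⟨hs.1.le, hs.2⟩
      have hεpos : (0:ℝ) < Real.sqrt ε := Real.sqrt_pos.2 hε
      rw [Real.norm_eq_abs]
      simp only [hfdef]
      have h1 : Real.sqrt ε * |u' s| ≤ |Real.sqrt (a s) * u' s| := by
        rw [abs_mul, abs_of_nonneg (Real.sqrt_nonneg _)]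
        exact mul_le_mul_of_nonneg_right (Real.sqrt_le_sqrt hεs) (abs_nonneg _)
      calc |u' s| = Real.sqrt ε * |u' s| * (Real.sqrt ε)⁻¹ := by field_simp
        _ ≤ |Real.sqrt (a s) * u' s| * (Real.sqrt ε)⁻¹ :=
            mul_le_mul_of_nonneg_right h1 (inv_nonneg.2 hεpos.le)
    have hFTC : ∫ s in (0:ℝ)..x, u' s = u x - u 0 := by
      refine intervalIntegral.integral_eq_sub_of_hasDerivAt
        (fun t ht => hderiv t (hIccsub (by rwa [uIcc_of_le hx0.le] at ht))) ?_
      exact (intervalIntegrable_iff_integrableOn_Ioc_of_le hx0.le).2 hu'int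
    have habs : |∫ s in (0:ℝ)..x, u' s| ≤ N * Real.sqrt (A x) := by
      refine le_trans (intervalIntegral.abs_integral_le_integral_abs hx0.le) ?_
      rwa [intervalIntegral.integral_of_le hx0.le]
    have : u 0 = u x - ∫ s in (0:ℝ)..x, u' s := by rw [hFTC]; ring
    rw [this]
    calc |u x - ∫ s in (0:ℝ)..x, u' s| ≤ |u x| + |∫ s in (0:ℝ)..x, u' s| := abs_sub _ _
      _ ≤ |u x| + N * Real.sqrt (A x) := by linarith
  -- integrate key over (0,1)
  haveI : IsFiniteMeasure (volume.restrict (Ioo (0:ℝ) 1)) := by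
    constructor
    rw [Measure.restrict_apply_univ]
    simp [Real.volume_Ioo]
  have huint01 : IntegrableOn (fun y => |u y|) (Ioo 0 1) := by
    have := ((hu.mono_measure (Measure.restrict_mono hsub01 le_rfl)).integrable
      (by norm_num)).abs
    exact this
  have hstep : |u 0| ≤ (∫ y in Ioo (0:ℝ) 1, |u y|) + N * K := by
    have h1 : |u 0| = ∫ _ in Ioo (0:ℝ) 1, |u 0| := by
      rw [setIntegral_const, Real.volume_real_Ioo]
      norm_num
    rw [h1]
    calc (∫ _ in Ioo (0:ℝ) 1, |u 0|)
        ≤ ∫ y in Ioo (0:ℝ) 1, (|u y| + N * Real.sqrt (A y)) :=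
          setIntegral_mono_on (integrable_const _)
            (huint01.add (hsqrtAint.const_mul N)) measurableSet_Ioo key
      _ = (∫ y in Ioo (0:ℝ) 1, |u y|) + N * K := by
          rw [integral_add huint01 (hsqrtAint.const_mul N), integral_const_mul]
  -- bound ∫ |u| by M via Cauchy–Schwarz
  have huL : ∫ y in Ioo (0:ℝ) 1, |u y| ≤ M := by
    set μ1 := volume.restrict (Ioo (0:ℝ) 1) with hμ1def
    have hu1 : MemLp (fun y => |u y|) 2 μ1 := by
      have := (hu.mono_measure (Measure.restrict_mono hsub01 le_rfl)).norm
      simpa [Real.norm_eq_abs] using this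
    have h1 : MemLp (fun _ : ℝ => (1:ℝ)) 2 μ1 := memLp_const 1
    have holder := integral_mul_le_Lp_mul_Lq_of_nonneg (μ := μ1) hpq
      (Filter.Eventually.of_forall fun s => abs_nonneg (u s))
      (Filter.Eventually.of_forall fun _ => zero_le_one)
      (by rw [hofReal]; exact hu1) (by rw [hofReal]; exact h1)
    have e1 : ∫ y, |u y| * 1 ∂μ1 = ∫ y in Ioo (0:ℝ) 1, |u y| := by
      simp [hμ1def]
    have e2 : ∫ y, |u y| ^ (2:ℝ) ∂μ1 = ∫ y in Ioo (0:ℝ) 1, u y ^ 2 := by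
      refine integral_congr_ae (Filter.Eventually.of_forall fun y => ?_)
      show |u y| ^ (2:ℝ) = u y ^ 2
      rw [hrpow2, sq_abs]
    have e3 : ∫ _ : ℝ, (1:ℝ) ^ (2:ℝ) ∂μ1 = 1 := by
      simp [hμ1def, Real.volume_Ioo]
    rw [e1, e2, e3] at holder
    have hIooS : ∫ y in Ioo (0:ℝ) 1, u y ^ 2 ≤ S :=
      setIntegral_mono_set huSq (Filter.Eventually.of_forall fun y => sq_nonneg _)
        (Filter.Eventually.of_forall hsub01)
    calc ∫ y in Ioo (0:ℝ) 1, |u y|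
        ≤ (∫ y in Ioo (0:ℝ) 1, u y ^ 2) ^ (1 / (2:ℝ)) * (1:ℝ) ^ (1 / (2:ℝ)) := holder
      _ = Real.sqrt (∫ y in Ioo (0:ℝ) 1, u y ^ 2) := by
          rw [Real.one_rpow, mul_one, Real.sqrt_eq_rpow]
      _ ≤ M := Real.sqrt_le_sqrt hIooS
  have hfinal : |u 0| ≤ M + N * K := by linarith
  calc |u 0| ≤ M + N * K := hfinal
    _ ≤ R + R * K := by nlinarith
    _ = (1 + K) * R := by ring
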